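/- With C_{2ℓ,2} = binom(k-1,ℓ-1)binom(k+2λ,ℓ+1)/binom(-2(μ-λ-k),ℓ+1), C_{2ℓ,3} = -binom(k,ℓ+1)binom(k+2λ-1,ℓ-1)/binom(-2(μ-λ-k),ℓ+1), C_{2ℓ+1,1} = C_{2ℓ+1,3} = ε(k+2λ-ℓ)/ℓ · C_{2ℓ,3}, C_{2ℓ+1,2} = -ε(k-ℓ)/ℓ · C_{2ℓ,2}, C_{2ℓ+1,4} = ε(k-ℓ)/ℓ · C_{2ℓ,2} (where ε = ±1 is a fixed sign), the odd-index recurrence (ℓ+1)(ℓ+2(μ-λ-k))C_{2ℓ+1,2} = (k-ℓ+2λ)(ε C_{2ℓ,4} - (k-ℓ)C_{2ℓ-1,2}) holds for all ℓ in range, where C_{2ℓ,4} = -((k-ℓ)(2(μ-λ-k)+ℓ))/(ℓ(k-ℓ+2λ))·C_{2ℓ,2} (assuming 2(μ-λ) ∉ {0,1,...,2k} and all denominators nonzero). -/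

import Mathlib

noncomputable section

open Polynomial

/-- The Grassmann algebra `C^∞(S¹)[ξ₁,ξ₂]` (polynomial model in `x`):
an element `f₀ + ξ₁f₁ + ξ₂f₂ + ξ₁ξ₂f₁₂` is encoded by its four components. -/
abbrev Gr := Polynomial ℂ × Polynomial ℂ × Polynomial ℂ × Polynomial ℂ

namespace Gr

/-- Supercommutative multiplication. -/
def gmul (f g : Gr) : Gr :=
  (f.1 * g.1,
   f.1 * g.2.1 + f.2.1 * g.1,
   f.1 * g.2.2.1 + f.2.2.1 * g.1,
   f.1 * g.2.2.2 + f.2.2.2 * g.1 + f.2.1 * g.2.2.1 - f.2.2.1 * g.2.1)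

/-- The even vector field `∂ₓ`. -/
def dX (f : Gr) : Gr :=
  (derivative f.1, derivative f.2.1, derivative f.2.2.1, derivative f.2.2.2)

/-- The left odd derivation `∂_{ξ₁}`. -/
def dXi1 (f : Gr) : Gr := (f.2.1, 0, f.2.2.2, 0)

/-- The left odd derivation `∂_{ξ₂}`. -/
def dXi2 (f : Gr) : Gr := (f.2.2.1, -f.2.2.2, 0, 0)

def xi1 : Gr := (0, 1, 0, 0)
def xi2 : Gr := (0, 0, 1, 0)
def xi12 : Gr := (0, 0, 0, 1)
def oneG : Gr := (1, 0, 0, 0)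
def xG : Gr := (Polynomial.X, 0, 0, 0)

/-- `D̄₁ = ∂_{ξ₁} - ξ₁∂ₓ`. -/
def D1b (f : Gr) : Gr := dXi1 f - gmul xi1 (dX f)
/-- `D̄₂ = ∂_{ξ₂} - ξ₂∂ₓ`. -/
def D2b (f : Gr) : Gr := dXi2 f - gmul xi2 (dX f)
/-- `D₁ = ∂_{ξ₁} + ξ₁∂ₓ`. -/
def Dp1 (f : Gr) : Gr := dXi1 f + gmul xi1 (dX f)
/-- `D₂ = ∂_{ξ₂} + ξ₂∂ₓ`. -/
def Dp2 (f : Gr) : Gr := dXi2 f + gmul xi2 (dX f)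

/-- `f` is homogeneous of parity `p` (`false` = even, `true` = odd). -/
def IsHom (f : Gr) (p : Bool) : Prop :=
  if p then f.1 = 0 ∧ f.2.2.2 = 0 else f.2.1 = 0 ∧ f.2.2.1 = 0

/-- `(-1)^p`. -/
def sgn (p : Bool) : ℂ := if p then -1 else 1

/-- The contact vector field `X_f = f∂ₓ - (-1)^{p(f)} ½(D̄₁(f)D̄₁ + D̄₂(f)D̄₂)`. -/
def Xv (f : Gr) (p : Bool) (F : Gr) : Gr :=
  gmul f (dX F) - (sgn p * (1/2 : ℂ)) • (gmul (D1b f) (D1b F) + gmul (D2b f) (D2b F))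

/-- The Lie derivative `L^λ_{X_f} = X_f + λ f′` on λ-densities. -/
def L (lam : ℂ) (f : Gr) (p : Bool) (F : Gr) : Gr :=
  Xv f p F + lam • gmul (dX f) F

/-- The contact bracket `{f,g} = fg' - f'g - (-1)^{p(f)} ½(D̄₁(f)D̄₁(g) + D̄₂(f)D̄₂(g))`. -/
def cbr (f : Gr) (p : Bool) (g : Gr) : Gr :=
  gmul f (dX g) - gmul (dX f) g
    - (sgn p * (1/2 : ℂ)) • (gmul (D1b f) (D1b g) + gmul (D2b f) (D2b g))

/-- Generalized binomial coefficient `z(z-1)⋯(z-m+1)/m!`. -/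
noncomputable def cbinom (z : ℂ) (m : ℕ) : ℂ :=
  (∏ i ∈ Finset.range m, (z - i)) / (Nat.factorial m)


/-- `C_{2ℓ,2} = binom(k-1,ℓ-1)·binom(k+2λ,ℓ+1)/binom(-2(μ-λ-k),ℓ+1)`. -/
noncomputable def C2f (k : ℕ) (lam mu : ℂ) (ℓ : ℕ) : ℂ :=
  cbinom ((k : ℂ) - 1) (ℓ-1) * cbinom ((k : ℂ) + 2*lam) (ℓ+1)
    / cbinom (-2*(mu - lam - (k : ℂ))) (ℓ+1)

/-- `C_{2ℓ,4} = -((k-ℓ)(2(μ-λ-k)+ℓ))/(ℓ(k-ℓ+2λ)) · C_{2ℓ,2}`. -/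
noncomputable def C4f (k : ℕ) (lam mu : ℂ) (ℓ : ℕ) : ℂ :=
  -(((k : ℂ) - ℓ) * (2*(mu - lam - (k : ℂ)) + ℓ)) / ((ℓ : ℂ) * ((k : ℂ) - ℓ + 2*lam))
    * C2f k lam mu ℓ

/-- `C_{2ℓ,3} = -binom(k,ℓ+1)·binom(k+2λ-1,ℓ-1)/binom(-2(μ-λ-k),ℓ+1)`. -/
noncomputable def C3f (k : ℕ) (lam mu : ℂ) (ℓ : ℕ) : ℂ :=
  -(cbinom (k : ℂ) (ℓ+1) * cbinom ((k : ℂ) + 2*lam - 1) (ℓ-1))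
    / cbinom (-2*(mu - lam - (k : ℂ))) (ℓ+1)

/-- `C_{2ℓ+1,1} = C_{2ℓ+1,3} = ε(k+2λ-ℓ)/ℓ · C_{2ℓ,3}`. -/
noncomputable def Codd13 (k : ℕ) (lam mu ε : ℂ) (ℓ : ℕ) : ℂ :=
  ε * ((k : ℂ) + 2*lam - ℓ) / (ℓ : ℂ) * C3f k lam mu ℓ

/-- `C_{2ℓ+1,2} = -ε(k-ℓ)/ℓ · C_{2ℓ,2}`. -/
noncomputable def Codd2 (k : ℕ) (lam mu ε : ℂ) (ℓ : ℕ) : ℂ :=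
  -(ε * ((k : ℂ) - ℓ) / (ℓ : ℂ)) * C2f k lam mu ℓ

/-- `C_{2ℓ+1,4} = ε(k-ℓ)/ℓ · C_{2ℓ,2}`. -/
noncomputable def Codd4 (k : ℕ) (lam mu ε : ℂ) (ℓ : ℕ) : ℂ :=
  ε * ((k : ℂ) - ℓ) / (ℓ : ℂ) * C2f k lam mu ℓ


lemma cbinom_succ (z : ℂ) (m : ℕ) :
    cbinom z (m+1) = cbinom z m * (z - m) / ((m : ℂ) + 1) := by
  have h1 : ((m : ℂ) + 1) ≠ 0 := by exact_mod_cast Nat.succ_ne_zero m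
  have h2 : ((m.factorial : ℕ) : ℂ) ≠ 0 := Nat.cast_ne_zero.mpr m.factorial_ne_zero
  unfold cbinom
  rw [Finset.prod_range_succ, Nat.factorial_succ]
  push_cast
  rw [div_mul_eq_mul_div, div_div, mul_comm ((m:ℂ)+1)]


set_option maxHeartbeats 4000000 in
lemma aux_field (ε q kc la pc A B D : ℂ) (hε : ε = 1 ∨ ε = -1)
    (hp1 : pc+1 ≠ 0) (hp2 : pc+2 ≠ 0) (hp3 : pc+3 ≠ 0)
    (hA : kc-(pc+2)+2*la ≠ 0) (hD : D ≠ 0) (hB : -2*q-(pc+2) ≠ 0) :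
    (pc+2+1)*(pc+2+2*q) *
        (-(ε*(kc-(pc+2))/(pc+2)) *
          (A*(kc-1-pc)/(pc+1) * (B*(kc+2*la-(pc+2))/(pc+2+1)) /
            (D*(-2*q-(pc+2))/(pc+2+1))))
      = (kc-(pc+2)+2*la) *
          (ε * (-((kc-(pc+2))*(2*q+(pc+2))) / ((pc+2)*(kc-(pc+2)+2*la)) *
            (A*(kc-1-pc)/(pc+1) * (B*(kc+2*la-(pc+2))/(pc+2+1)) /
              (D*(-2*q-(pc+2))/(pc+2+1)))) -
            (kc-(pc+2)) * (-(ε*(kc-(pc+1))/(pc+1)) * (A*B/D))) := by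
  have hp3' : pc+2+1 ≠ 0 := fun h => hp3 (by linear_combination h)
  rw [div_div_eq_mul_div]
  field_simp
  have hB' : (-(2*q) - (pc+2)) ≠ 0 := fun h => hB (by linear_combination h)
  have hX : (pc + 2) * ((pc + 1) * (pc + 2 + 1) * (D * (-(2 * q) - (pc + 2)))) ≠ 0 :=
    mul_ne_zero hp2 (mul_ne_zero (mul_ne_zero hp1 hp3') (mul_ne_zero hD hB'))
  have hY : (pc + 2) * (kc - (pc + 2) + 2 * la) *
      ((pc + 1) * (pc + 2 + 1) * (D * (-(2 * q) - (pc + 2)))) ≠ 0 :=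
    mul_ne_zero (mul_ne_zero hp2 hA) (mul_ne_zero (mul_ne_zero hp1 hp3') (mul_ne_zero hD hB'))
  field_simp
  ring

set_option maxHeartbeats 1000000 in
/-- the odd-index recurrence
`(ℓ+1)(ℓ+2(μ-λ-k))C_{2ℓ+1,2} = (k-ℓ+2λ)(ε C_{2ℓ,4} - (k-ℓ)C_{2ℓ-1,2})` holds
for the closed-form coefficients (assuming nonresonance and nonzero denominators). -/
theorem stmt10 (k : ℕ) (hk : 1 ≤ k) (lam mu : ℂ) (ε : ℂ) (hε : ε = 1 ∨ ε = -1)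
    (hres : ∀ j : ℕ, j ≤ 2*k → 2*(mu - lam) ≠ (j : ℂ)) :
    ∀ ℓ : ℕ, 2 ≤ ℓ → ℓ ≤ k - 1 →
      ((k : ℂ) - ℓ + 2*lam) ≠ 0 →
      cbinom (-2*(mu - lam - (k : ℂ))) (ℓ+1) ≠ 0 →
      cbinom (-2*(mu - lam - (k : ℂ))) ℓ ≠ 0 →
      ((ℓ : ℂ) + 1) * ((ℓ : ℂ) + 2*(mu - lam - (k : ℂ))) * Codd2 k lam mu ε ℓ
        = ((k : ℂ) - ℓ + 2*lam) *
            (ε * C4f k lam mu ℓ - ((k : ℂ) - ℓ) * Codd2 k lam mu ε (ℓ-1)) := by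
  intro ℓ hℓ2 hℓk hA h3 h2'
  obtain ⟨p, rfl⟩ : ∃ p, ℓ = p + 2 := ⟨ℓ - 2, by omega⟩
  have hkp : p + 2 ≤ k - 1 := hℓk
  have hkp' : p + 3 ≤ k := by omega
  have hB : (-2*(mu - lam - (k : ℂ)) - ((p : ℂ) + 2)) ≠ 0 := by
    intro h
    apply hres (2*k - (p+2)) (by omega)
    have : ((2*k - (p+2) : ℕ) : ℂ) = 2*(k:ℂ) - ((p:ℂ)+2) := by
      push_cast [Nat.cast_sub (by omega : p+2 ≤ 2*k)]; ring
    rw [this]; linear_combination -h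
  have hp1 : ((p : ℂ) + 1) ≠ 0 := by exact_mod_cast Nat.succ_ne_zero p
  have hp2 : ((p : ℂ) + 2) ≠ 0 := by exact_mod_cast Nat.succ_ne_zero (p+1)
  have hp3 : ((p : ℂ) + 3) ≠ 0 := by exact_mod_cast Nat.succ_ne_zero (p+2)
  have e1 : p + 2 - 1 = p + 1 := by omega
  have e2 : p + 1 - 1 = p := by omega
  have hD : cbinom (-2*(mu - lam - (k : ℂ))) (p+2) ≠ 0 := h2'
  simp only [Codd2, C4f, C2f, e1, e2]
  rw [cbinom_succ (-2*(mu-lam-(k:ℂ))) (p+2), cbinom_succ ((k:ℂ)+2*lam) (p+2),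
    cbinom_succ ((k:ℂ)-1) p]
  push_cast
  push_cast at hA
  exact aux_field ε (mu - lam - (k:ℂ)) (k:ℂ) lam (p:ℂ)
    (cbinom ((k:ℂ)-1) p) (cbinom ((k:ℂ)+2*lam) (p+2))
    (cbinom (-2*(mu - lam - (k:ℂ))) (p+2)) hε hp1 hp2 hp3 hA hD hB


end Gr
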